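/- Let P(x) be a real degree-5 polynomial with P' = x(x−μ)(x−λ)(x−1), and set R(x,y) = (1/5)y^4 − (1/6)y^2 P'''(x) + P'(x) (so that Im P(x+iy) = y·R(x,y)). At every nondegenerate real critical point (ξ, η) of R, the Hessian determinant R_xx R_yy − R_xy^2 is strictly negative; specifically it equals −(1/3)(P'''(ξ))^2 if η = 0 and P''(ξ) = 0, and equals −(5/108)P'''(ξ)(P''''(ξ))^2 − (4/9)(P'''(ξ))^2 if η^2 = (5/12)P'''(ξ). Hence every nondegenerate critical point of R is a saddle. -/

import Mathlib

theorem polyDeriv4 (a b c d e : ℝ) :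
    deriv (fun x : ℝ => a*x^4 + b*x^3 + c*x^2 + d*x + e) =
    fun x => 0*x^4 + (4*a)*x^3 + (3*b)*x^2 + (2*c)*x + d := by
  funext x
  have h : HasDerivAt (fun x : ℝ => a*x^4 + b*x^3 + c*x^2 + d*x + e)
      (0*x^4 + (4*a)*x^3 + (3*b)*x^2 + (2*c)*x + d) x := by
    have h4 := (hasDerivAt_pow 4 x).const_mul a
    have h3 := (hasDerivAt_pow 3 x).const_mul b
    have h2 := (hasDerivAt_pow 2 x).const_mul c
    have h1 := (hasDerivAt_id x).const_mul d
    have h0 := (((h4.add h3).add h2).add h1).add_const e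
    convert h0 using 1
    · rfl
    · rfl
    · rfl
    push_cast
    ring
  exact h.deriv

/-- Let `P` be a real degree-5 polynomial with
`P' (x) = x(x−μ)(x−λ)(x−1)` and set `R(x,y) = (1/5)y⁴ − (1/6)y²P'''(x) + P'(x)`
(so that `Im P(x+iy) = y·R(x,y)`).  At every nondegenerate real critical point `(ξ,η)` of
`R` the Hessian determinant `R_xx R_yy − R_xy²` is strictly negative; it equals
`−(1/3)(P'''(ξ))²` when `η = 0, P''(ξ) = 0`, and
`−(5/108)P'''(ξ)(P''''(ξ))² − (4/9)(P'''(ξ))²` when `η² = (5/12)P'''(ξ)` and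
`P''(ξ) − (5/72)P'''(ξ)P''''(ξ) = 0`. -/
theorem stmt12 (lam mu : ℝ) (p1 p2 p3 p4 : ℝ → ℝ)
    (hp1 : ∀ x, p1 x = x * (x - mu) * (x - lam) * (x - 1))
    (hp2 : p2 = deriv p1) (hp3 : p3 = deriv p2) (hp4 : p4 = deriv p3)
    (R : ℝ → ℝ → ℝ)
    (hR : ∀ x y, R x y = (1 / 5) * y ^ 4 - (1 / 6) * y ^ 2 * p3 x + p1 x)
    (ξ η : ℝ)
    (hcx : deriv (fun x => R x η) ξ = 0) (hcy : deriv (fun y => R ξ y) η = 0)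
    (Hess : ℝ)
    (hHess : Hess = deriv (deriv (fun x => R x η)) ξ * deriv (deriv (fun y => R ξ y)) η -
      (deriv (fun x => deriv (fun y => R x y) η) ξ) ^ 2) :
    ((η = 0 ∧ p2 ξ = 0) → Hess = -(1 / 3) * (p3 ξ) ^ 2) ∧
    ((η ^ 2 = (5 / 12) * p3 ξ ∧ p2 ξ - (5 / 72) * p3 ξ * p4 ξ = 0) →
      Hess = -(5 / 108) * p3 ξ * (p4 ξ) ^ 2 - (4 / 9) * (p3 ξ) ^ 2) ∧
    (Hess ≠ 0 → Hess < 0) := by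
  -- explicit polynomial forms
  have e1 : p1 = fun x => 1*x^4 + (-(1+lam+mu))*x^3 + (mu+lam+lam*mu)*x^2 +
      (-(lam*mu))*x + 0 := funext fun x => by rw [hp1]; ring
  have e2 : p2 = fun x => 0*x^4 + (4*1)*x^3 + (3*(-(1+lam+mu)))*x^2 +
      (2*(mu+lam+lam*mu))*x + (-(lam*mu)) := by rw [hp2, e1, polyDeriv4]
  have e3 : p3 = fun x => 0*x^4 + (4*0)*x^3 + (3*(4*1))*x^2 +
      (2*(3*(-(1+lam+mu))))*x + (2*(mu+lam+lam*mu)) := by rw [hp3, e2, polyDeriv4]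
  have e4 : p4 = fun x => 0*x^4 + (4*0)*x^3 + (3*(4*0))*x^2 +
      (2*(3*(4*1)))*x + (2*(3*(-(1+lam+mu)))) := by rw [hp4, e3, polyDeriv4]
  have hP3 : ∀ x, p3 x = 12*x^2 - 6*(1+lam+mu)*x + 2*(mu+lam+lam*mu) := fun x => by
    rw [e3]; ring
  have hP4 : ∀ x, p4 x = 24*x - 6*(1+lam+mu) := fun x => by rw [e4]; ring
  -- x-slice of R as explicit quartic
  have hRx : (fun x => R x η) = fun x => 1*x^4 + (-(1+lam+mu))*x^3 +
      ((mu+lam+lam*mu) - 2*η^2)*x^2 + (-(lam*mu) + η^2*(1+lam+mu))*x +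
      ((1/5)*η^4 - (1/3)*η^2*(mu+lam+lam*mu)) := funext fun x => by
    rw [hR, hP3, hp1]; ring
  -- y-slice of R at a point x as explicit quartic (for any x)
  have hRy : ∀ x : ℝ, (fun y => R x y) = fun y => (1/5)*y^4 + 0*y^3 +
      (-(1/6)*p3 x)*y^2 + 0*y + p1 x := fun x => funext fun y => by
    rw [hR]; ring
  -- first derivatives
  have hDx : deriv (fun x => R x η) ξ =
      4*ξ^3 - 3*(1+lam+mu)*ξ^2 + 2*((mu+lam+lam*mu) - 2*η^2)*ξ +
      (-(lam*mu) + η^2*(1+lam+mu)) := by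
    rw [hRx, polyDeriv4]; ring
  have hDy : ∀ x : ℝ, deriv (fun y => R x y) η = (4/5)*η^3 - (1/3)*(p3 x)*η := by
    intro x; rw [hRy x, polyDeriv4]; ring
  -- second derivatives
  have hDxx : deriv (deriv (fun x => R x η)) ξ = p3 ξ - 4*η^2 := by
    rw [hRx, polyDeriv4, polyDeriv4, hP3]; ring
  have hDyy : deriv (deriv (fun y => R ξ y)) η = (12/5)*η^2 - (1/3)*p3 ξ := by
    rw [hRy ξ, polyDeriv4, polyDeriv4]; ring
  -- mixed derivative
  have hmixf : (fun x => deriv (fun y => R x y) η) = fun x =>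
      0*x^4 + 0*x^3 + (-4*η)*x^2 + (2*(1+lam+mu)*η)*x +
      ((4/5)*η^3 - (2/3)*η*(mu+lam+lam*mu)) := funext fun x => by
    rw [hDy x, hP3]; ring
  have hDxy : deriv (fun x => deriv (fun y => R x y) η) ξ = -(1/3)*η*(p4 ξ) := by
    rw [hmixf, polyDeriv4, hP4]; ring
  -- Hessian closed form
  have hH : Hess = (p3 ξ - 4*η^2) * ((12/5)*η^2 - (1/3)*p3 ξ)
      - (1/9)*η^2*(p4 ξ)^2 := by
    rw [hHess, hDxx, hDyy, hDxy]; ring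
  -- critical point equation in y
  have hcy' : η * ((4/5)*η^2 - (1/3)*p3 ξ) = 0 := by
    rw [hDy ξ] at hcy; linarith [hcy]
  refine ⟨?_, ?_, ?_⟩
  · rintro ⟨h0, -⟩
    rw [hH, h0]; ring
  · rintro ⟨h2, -⟩
    rw [hH]
    linear_combination (-(48/5)*η^2 - (4/15)*p3 ξ - (1/9)*(p4 ξ)^2) * h2
  · intro hne
    have hle : Hess ≤ 0 := by
      rcases mul_eq_zero.mp hcy' with h0 | h1
      · rw [hH, h0]; nlinarith [sq_nonneg (p3 ξ)]
      · have h2 : η^2 = (5/12)*p3 ξ := by linarith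
        have ht : 0 ≤ p3 ξ := by nlinarith [sq_nonneg η]
        rw [hH]
        nlinarith [sq_nonneg (p3 ξ), sq_nonneg (p4 ξ), mul_nonneg ht (sq_nonneg (p4 ξ))]
    exact lt_of_le_of_ne hle hne
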